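/- arXiv:2601.18782 — 3 statements merged into one kernel-verified Lean document; each statement's English description precedes it below -/
import Mathlib

section
/- Let f = X_r α be an r-bandlimited graph signal with ‖f‖_∞ = 1, where X_r ∈ ℝ^{N×r} has orthonormal columns and has incoherence μ_r := (N/r) max_i ‖X_r X_rᵀ e_i‖₂². Then ‖f‖₂² ≥ N/(r μ_r). -/
open Matrix

/-- Squared Euclidean norm of a finite real vector. -/
noncomputable def sqnorm {k : ℕ} (v : Fin k → ℝ) : ℝ := ∑ j, (v j) ^ 2

/-- Incoherence of the column span of `X`. -/
noncomputable def incoherence (N r : ℕ) (X : Matrix (Fin N) (Fin r) ℝ) : ℝ :=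
  (N / r : ℝ) * ⨆ i : Fin N, sqnorm ((X * Xᵀ).mulVec (Pi.single i 1))

/-- An `r`-bandlimited graph signal `f = X_r α` with `‖f‖_∞ = 1` satisfies
`‖f‖₂² ≥ N / (r μ_r)`. -/
theorem stmt_2 (N r : ℕ) (hr : 0 < r) (hrN : r ≤ N)
    (X : Matrix (Fin N) (Fin r) ℝ) (hX : Xᵀ * X = 1)
    (α : Fin r → ℝ) (f : Fin N → ℝ) (hf : f = X.mulVec α)
    (hinf : (⨆ i : Fin N, |f i|) = 1) :
    (N : ℝ) / (r * incoherence N r X) ≤ sqnorm f := by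
  have hN : 0 < N := lt_of_lt_of_le hr hrN
  haveI : Nonempty (Fin N) := ⟨⟨0, hN⟩⟩
  set P : Matrix (Fin N) (Fin N) ℝ := X * Xᵀ with hP
  -- P f = f
  have hPf : P.mulVec f = f := by
    have hinner : Xᵀ.mulVec (X.mulVec α) = α := by
      rw [Matrix.mulVec_mulVec, hX, Matrix.one_mulVec]
    rw [hf, hP, ← Matrix.mulVec_mulVec, hinner]
  -- P symmetric
  have hPsym : Pᵀ = P := by
    rw [hP, Matrix.transpose_mul, Matrix.transpose_transpose]
  -- pick i achieving the sup of |f i|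
  obtain ⟨i, hi⟩ := Finite.exists_max fun i : Fin N => |f i|
  have hsup : (⨆ j : Fin N, |f j|) = |f i| :=
    le_antisymm (ciSup_le hi) (le_ciSup (f := fun j : Fin N => |f j|) (Set.Finite.bddAbove (Set.finite_range _)) i)
  have hfi : |f i| = 1 := by rw [← hsup, hinf]
  set g : Fin N → ℝ := P.mulVec (Pi.single i 1) with hg
  have hgj : ∀ j, g j = P i j := by
    intro j
    rw [hg, Matrix.mulVec_single_one]
    exact congrFun (congrFun hPsym i) j
  have hfi' : f i = ∑ j, g j * f j := by
    conv_lhs => rw [← hPf]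
    simp only [Matrix.mulVec, dotProduct]
    exact Finset.sum_congr rfl fun j _ => by rw [hgj j]
  -- Cauchy–Schwarz
  have hCS : (f i) ^ 2 ≤ sqnorm g * sqnorm f := by
    rw [hfi']
    exact Finset.sum_mul_sq_le_sq_mul_sq Finset.univ g f
  have h1 : (1 : ℝ) ≤ sqnorm g * sqnorm f := by
    calc (1 : ℝ) = |f i| ^ 2 := by rw [hfi]; norm_num
    _ = (f i) ^ 2 := sq_abs _
    _ ≤ _ := hCS
  set s : ℝ := ⨆ j : Fin N, sqnorm (P.mulVec (Pi.single j 1)) with hs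
  have hgs : sqnorm g ≤ s :=
    le_ciSup (f := fun j : Fin N => sqnorm (P.mulVec (Pi.single j 1)))
      (Set.Finite.bddAbove (Set.finite_range _)) i
  have hfnn : 0 ≤ sqnorm f := Finset.sum_nonneg fun j _ => sq_nonneg _
  have h2 : (1 : ℝ) ≤ s * sqnorm f :=
    h1.trans (mul_le_mul_of_nonneg_right hgs hfnn)
  have hspos : 0 < s := by
    by_contra h
    push_neg at h
    nlinarith
  have hgoal : 1 / s ≤ sqnorm f := by
    rw [div_le_iff₀ hspos]
    linarith [h2]
  have heq : (N : ℝ) / (r * incoherence N r X) = 1 / s := by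
    have hr0 : (r : ℝ) ≠ 0 := Nat.cast_ne_zero.mpr hr.ne'
    have hN0 : (N : ℝ) ≠ 0 := Nat.cast_ne_zero.mpr hN.ne'
    rw [incoherence, ← hP, ← hs]
    field_simp
  rw [heq]
  exact hgoal
end

section
/- State-norm growth bound: let u_0 = 0 ∈ ℝ^n and suppose for each i = 1, …, M that u_i = u_{i−1} + (f_i − q_i) ℓ_i where ℓ_i ∈ ℝ^n is nonzero with ‖ℓ_i‖₂² ≤ B, and either (a) |f_i + ⟨ℓ_i, u_{i−1}⟩/‖ℓ_i‖₂² − q_i| ≤ δ/2, or (b) |f_i + ⟨ℓ_i, u_{i−1}⟩/‖ℓ_i‖₂² − q_i| ≤ |⟨ℓ_i, u_{i−1}⟩/‖ℓ_i‖₂²|. Then ‖u_M‖₂² ≤ M B δ²/4. -/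
/-- State-norm growth bound for the noise-shaping recursion: starting from
`u₀ = 0` and updating `u_i = u_{i−1} + (f_i − q_i)ℓ_i`, where each step is
either `δ/2`-accurate or saturated, we get `‖u_M‖₂² ≤ M B δ²/4`. -/
theorem stmt_11 (n M : ℕ) (δ B : ℝ) (hδ : 0 < δ) (hB : 0 < B)
    (ℓ : Fin M → EuclideanSpace ℝ (Fin n)) (f q : Fin M → ℝ)
    (u : ℕ → EuclideanSpace ℝ (Fin n)) (hu0 : u 0 = 0)
    (hrec : ∀ i : Fin M, u (i + 1) = u i + (f i - q i) • ℓ i)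
    (hne : ∀ i : Fin M, ℓ i ≠ 0)
    (hbnd : ∀ i : Fin M, ‖ℓ i‖ ^ 2 ≤ B)
    (hcase : ∀ i : Fin M,
      |f i + (inner ℝ (ℓ i) (u i) : ℝ) / ‖ℓ i‖ ^ 2 - q i| ≤ δ / 2 ∨
      |f i + (inner ℝ (ℓ i) (u i) : ℝ) / ‖ℓ i‖ ^ 2 - q i| ≤
        |(inner ℝ (ℓ i) (u i) : ℝ) / ‖ℓ i‖ ^ 2|) :
    ‖u M‖ ^ 2 ≤ M * B * δ ^ 2 / 4 := by
  have key : ∀ i : Fin M, ‖u (i + 1)‖ ^ 2 ≤ ‖u i‖ ^ 2 + B * δ ^ 2 / 4 := by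
    intro i
    have hL2 : (0:ℝ) < ‖ℓ i‖ ^ 2 := by
      have := norm_pos_iff.mpr (hne i); positivity
    set c : ℝ := (inner ℝ (ℓ i) (u i) : ℝ) / ‖ℓ i‖ ^ 2 with hc
    have hinner : (inner ℝ (ℓ i) (u i) : ℝ) = c * ‖ℓ i‖ ^ 2 := by
      rw [hc, div_mul_cancel₀ _ hL2.ne']
    set e : ℝ := f i + c - q i with he
    have hfq : f i - q i = e - c := by rw [he]; ring
    have expand : ‖u (i + 1)‖ ^ 2
        = ‖u i‖ ^ 2 + (e ^ 2 - c ^ 2) * ‖ℓ i‖ ^ 2 := by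
      rw [hrec i, norm_add_sq_real, real_inner_smul_right, real_inner_comm,
        hinner, norm_smul, hfq]
      simp [mul_pow, Real.norm_eq_abs, sq_abs]
      ring
    have hcase' : |e| ≤ δ / 2 ∨ |e| ≤ |c| := by simpa [he, hc] using hcase i
    clear_value c e
    rw [expand]
    rcases hcase' with h | h
    · have he2 : e ^ 2 ≤ (δ / 2) ^ 2 := by
        rw [← sq_abs]
        exact pow_le_pow_left₀ (abs_nonneg _) h 2
      have hc2 : (0:ℝ) ≤ c ^ 2 := sq_nonneg c
      nlinarith [hbnd i, sq_nonneg e, sq_nonneg c, hL2]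
    · have : e ^ 2 ≤ c ^ 2 := by
        rw [← sq_abs e, ← sq_abs c]
        exact pow_le_pow_left₀ (abs_nonneg _) h 2
      have h1 : 0 ≤ (c ^ 2 - e ^ 2) * ‖ℓ i‖ ^ 2 :=
        mul_nonneg (by linarith) hL2.le
      nlinarith [mul_pos hB (by positivity : (0:ℝ) < δ ^ 2)]
  have main : ∀ k : ℕ, k ≤ M → ‖u k‖ ^ 2 ≤ k * B * δ ^ 2 / 4 := by
    intro k
    induction k with
    | zero => intro _; simp [hu0]
    | succ k ih =>
      intro hk
      have hkM : k < M := hk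
      have h1 := key ⟨k, hkM⟩
      have h2 := ih (le_of_lt hkM)
      simp only [Fin.val_mk] at h1
      push_cast
      nlinarith
  exact main M le_rfl
end

section
/- Quantization error bound of Algorithm SSS-R (deterministic part): under the setting of the previous recursion with ‖ℓ_i‖₂² ≤ μ r / N for all i, the accumulated shaped error satisfies ‖Σ_{i=1}^M ℓ_i (f_i − q_i)‖₂² ≤ μ δ² r M / (4N). -/
/-- Deterministic quantization error bound of Algorithm SSS-R: under the
noise-shaping recursion with `‖ℓ_i‖₂² ≤ μ r / N`, the accumulated shaped
error satisfies `‖∑ ℓ_i (f_i − q_i)‖₂² ≤ μ δ² r M / (4N)`. -/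
theorem stmt_12 (r M N : ℕ) (hN : 0 < N) (μ δ : ℝ) (hμ : 0 < μ) (hδ : 0 < δ)
    (ℓ : Fin M → EuclideanSpace ℝ (Fin r)) (f q : Fin M → ℝ)
    (u : ℕ → EuclideanSpace ℝ (Fin r)) (hu0 : u 0 = 0)
    (hrec : ∀ i : Fin M, u (i + 1) = u i + (f i - q i) • ℓ i)
    (hne : ∀ i : Fin M, ℓ i ≠ 0)
    (hbnd : ∀ i : Fin M, ‖ℓ i‖ ^ 2 ≤ μ * r / N)
    (hcase : ∀ i : Fin M,
      |f i + (inner ℝ (ℓ i) (u i) : ℝ) / ‖ℓ i‖ ^ 2 - q i| ≤ δ / 2 ∨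
      |f i + (inner ℝ (ℓ i) (u i) : ℝ) / ‖ℓ i‖ ^ 2 - q i| ≤
        |(inner ℝ (ℓ i) (u i) : ℝ) / ‖ℓ i‖ ^ 2|) :
    ‖∑ i : Fin M, (f i - q i) • ℓ i‖ ^ 2 ≤ μ * δ ^ 2 * r * M / (4 * N) := by
  set B : ℝ := μ * δ ^ 2 * r / (4 * N) with hB
  have key : ∀ n, n ≤ M → ‖u n‖ ^ 2 ≤ n * B := by
    intro n hn
    induction n with
    | zero => simp [hu0]
    | succ k ih =>
      have hkM : k < M := hn
      have hci := hcase ⟨k, hkM⟩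
      have hri := hrec ⟨k, hkM⟩
      have hbi := hbnd ⟨k, hkM⟩
      simp only [Fin.val_mk] at hci hri
      set c : ℝ := f ⟨k, hkM⟩ - q ⟨k, hkM⟩ with hc
      set a : ℝ := (inner ℝ (ℓ ⟨k, hkM⟩) (u k) : ℝ) / ‖ℓ ⟨k, hkM⟩‖ ^ 2 with ha
      have hL : (0:ℝ) < ‖ℓ ⟨k, hkM⟩‖ := norm_pos_iff.mpr (hne ⟨k, hkM⟩)
      have hL2 : ‖ℓ ⟨k, hkM⟩‖ ^ 2 ≠ 0 := by positivity
      have haL : (inner ℝ (ℓ ⟨k, hkM⟩) (u k) : ℝ) = a * ‖ℓ ⟨k, hkM⟩‖ ^ 2 := by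
        rw [ha]; field_simp
      clear_value c a
      have hexp : ‖u (k+1)‖ ^ 2
          = ‖u k‖ ^ 2 + ‖ℓ ⟨k, hkM⟩‖ ^ 2 * ((c + a) ^ 2 - a ^ 2) := by
        rw [hri, @norm_add_sq_real, real_inner_smul_right, real_inner_comm,
          haL, norm_smul, Real.norm_eq_abs, mul_pow, sq_abs]
        ring
      have h1 : (c + a) ^ 2 - a ^ 2 ≤ δ ^ 2 / 4 := by
        have hfa : f ⟨k, hkM⟩ + a - q ⟨k, hkM⟩ = c + a := by rw [hc]; ring
        rw [hfa] at hci
        rcases hci with h | h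
        · have h' := abs_le.mp h
          nlinarith [sq_nonneg a]
        · have h' : |c + a| ^ 2 ≤ |a| ^ 2 :=
            pow_le_pow_left₀ (abs_nonneg _) h 2
          rw [sq_abs, sq_abs] at h'
          have hδ4 : (0:ℝ) ≤ δ ^ 2 / 4 := by positivity
          linarith
      have h2 : ‖ℓ ⟨k, hkM⟩‖ ^ 2 * ((c + a) ^ 2 - a ^ 2) ≤ B := by
        calc ‖ℓ ⟨k, hkM⟩‖ ^ 2 * ((c + a) ^ 2 - a ^ 2)
            ≤ ‖ℓ ⟨k, hkM⟩‖ ^ 2 * (δ ^ 2 / 4) :=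
              mul_le_mul_of_nonneg_left h1 (by positivity)
          _ ≤ (μ * r / N) * (δ ^ 2 / 4) :=
              mul_le_mul_of_nonneg_right hbi (by positivity)
          _ = B := by rw [hB]; ring
      have ihk := ih (Nat.le_of_succ_le hn)
      have : ‖u (k+1)‖ ^ 2 ≤ k * B + B := by
        rw [hexp]; linarith
      calc ‖u (k+1)‖ ^ 2 ≤ k * B + B := this
        _ = (k + 1 : ℕ) * B := by push_cast; ring
  have hsum : ∀ n, n ≤ M → u n
      = ∑ i ∈ Finset.range n,
          (if h : i < M then (f ⟨i, h⟩ - q ⟨i, h⟩) • ℓ ⟨i, h⟩ else 0) := by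
    intro n hn
    induction n with
    | zero => simp [hu0]
    | succ k ih =>
      have hkM : k < M := hn
      rw [Finset.sum_range_succ, ← ih (Nat.le_of_succ_le hn), dif_pos hkM]
      have hri := hrec ⟨k, hkM⟩
      simp only [Fin.val_mk] at hri
      exact hri
  have hfin : ∑ i : Fin M, (f i - q i) • ℓ i = u M := by
    rw [hsum M le_rfl, ← Fin.sum_univ_eq_sum_range
      (fun i => if h : i < M then (f ⟨i, h⟩ - q ⟨i, h⟩) • ℓ ⟨i, h⟩ else 0)]
    refine Finset.sum_congr rfl fun i _ => ?_
    rw [dif_pos i.isLt]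
  rw [hfin]
  calc ‖u M‖ ^ 2 ≤ M * B := key M le_rfl
    _ = μ * δ ^ 2 * r * M / (4 * N) := by rw [hB]; ring
end
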